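/- Let K ⊆ ℝ^d_+ be nonempty and compact with ‖x‖ ≤ R for all x ∈ K, let α ≥ 1, R > 0, F > 0, η > 0, ε > 0 and T ≥ 1. Let f_1, …, f_T ∈ ℝ^d_+ with ‖f_t‖ ≤ F for all t. Let ỹ_1, …, ỹ_T ∈ ℝ^d, p_1, …, p_T ∈ ℝ^d and s̄_1, …, s̄_T ∈ conv(K) be sequences such that: ỹ_1 = α s_1 for some s_1 ∈ K, p_1 = ỹ_1, s̄_1 = s_1; for every t ∈ {1,…,T−1} and every z ∈ conv(αK): ‖z − ỹ_{t+1}‖² ≤ ‖z − (ỹ_t − η f_t)‖²; for every t ∈ {2,…,T}: ‖p_t − ỹ_t‖ ≤ 3ε; and for every t ∈ {1,…,T} and every f ∈ ℝ^d_+: s̄_t·f ≤ p_t·f. Then (1/T)·Σ_{t=1}^T s̄_t·f_t − α·min_{x∈K} (1/T)·Σ_{t=1}^T x·f_t ≤ α²R²/(Tη) + ηF²/2 + 3Fε. -/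

import Mathlib

open scoped RealInnerProductSpace Pointwise

set_option maxHeartbeats 1000000 in
/-- Deterministic core of the regret guarantee of online gradient descent with
infeasible projections onto `conv(αK)` (full-information setting, losses,
`α ≥ 1`): the α-regret of the dominating sequence `s̄` is bounded by
`α²R²/(Tη) + ηF²/2 + 3Fε`. -/
theorem ogd_infeasible_projection_alpha_regret {d : ℕ}
    (K : Set (EuclideanSpace ℝ (Fin d))) (R α F η ε : ℝ) (T : ℕ)
    (hK : K.Nonempty) (hKc : IsCompact K)
    (hKpos : ∀ x ∈ K, ∀ i, 0 ≤ x i) (hKR : ∀ x ∈ K, ‖x‖ ≤ R)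
    (hα : 1 ≤ α) (hR : 0 < R) (hF : 0 < F) (hη : 0 < η) (hε : 0 < ε) (hT : 1 ≤ T)
    (f : ℕ → EuclideanSpace ℝ (Fin d))
    (hfpos : ∀ t ∈ Finset.Icc 1 T, ∀ i, 0 ≤ f t i)
    (hfF : ∀ t ∈ Finset.Icc 1 T, ‖f t‖ ≤ F)
    (ytil p sbar : ℕ → EuclideanSpace ℝ (Fin d))
    (s₁ : EuclideanSpace ℝ (Fin d)) (hs₁ : s₁ ∈ K)
    (hy1 : ytil 1 = α • s₁) (hp1 : p 1 = ytil 1) (hsbar1 : sbar 1 = s₁)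
    (hsbarK : ∀ t ∈ Finset.Icc 1 T, sbar t ∈ convexHull ℝ K)
    (hproj : ∀ t ∈ Finset.Icc 1 (T - 1), ∀ z ∈ convexHull ℝ (α • K),
      ‖z - ytil (t + 1)‖ ^ 2 ≤ ‖z - (ytil t - η • f t)‖ ^ 2)
    (hclose : ∀ t ∈ Finset.Icc 2 T, ‖p t - ytil t‖ ≤ 3 * ε)
    (hdom : ∀ t ∈ Finset.Icc 1 T, ∀ g : EuclideanSpace ℝ (Fin d),
      (∀ i, 0 ≤ g i) → ⟪sbar t, g⟫ ≤ ⟪p t, g⟫) :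
    (1 / (T : ℝ)) * ∑ t ∈ Finset.Icc 1 T, ⟪sbar t, f t⟫ -
      α * ⨅ x : K, (1 / (T : ℝ)) * ∑ t ∈ Finset.Icc 1 T,
        ⟪(x : EuclideanSpace ℝ (Fin d)), f t⟫ ≤
    α ^ 2 * R ^ 2 / ((T : ℝ) * η) + η * F ^ 2 / 2 + 3 * F * ε := by
  have hα0 : (0:ℝ) ≤ α := by linarith
  have hT0 : (0:ℝ) < (T : ℝ) := by exact_mod_cast Nat.lt_of_lt_of_le Nat.zero_lt_one hT
  -- minimizer of the average loss on K
  have hcont : ContinuousOn (fun x : EuclideanSpace ℝ (Fin d) =>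
      (1 / (T : ℝ)) * ∑ t ∈ Finset.Icc 1 T, ⟪x, f t⟫) K :=
    (continuous_const.mul (continuous_finset_sum _ fun t _ =>
      (continuous_id.inner continuous_const))).continuousOn
  obtain ⟨xs, hxsK, hxsmin⟩ := hKc.exists_isMinOn hK hcont
  have : Nonempty K := hK.to_subtype
  have hinf : (1 / (T : ℝ)) * ∑ t ∈ Finset.Icc 1 T, ⟪xs, f t⟫ ≤
      ⨅ x : K, (1 / (T : ℝ)) * ∑ t ∈ Finset.Icc 1 T,
        ⟪(x : EuclideanSpace ℝ (Fin d)), f t⟫ :=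
    le_ciInf fun y => hxsmin y.2
  refine le_trans (sub_le_sub_left (mul_le_mul_of_nonneg_left hinf hα0) _) ?_
  set z : EuclideanSpace ℝ (Fin d) := α • xs with hz
  have hzconv : z ∈ convexHull ℝ (α • K) :=
    subset_convexHull ℝ _ (Set.smul_mem_smul_set hxsK)
  -- potential
  set E : ℕ → ℝ := fun t => if t ≤ T then ‖z - ytil t‖ ^ 2 else 0 with hE
  have hFnn : (0:ℝ) ≤ F := le_of_lt hF
  -- per-step gradient inequality
  have hstep : ∀ t ∈ Finset.Icc 1 T,
      ⟪ytil t - z, f t⟫ ≤ (E t - E (t + 1)) / (2 * η) + η * F ^ 2 / 2 := by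
    intro t ht
    rw [Finset.mem_Icc] at ht
    have hf2 : ‖f t‖ ^ 2 ≤ F ^ 2 := by
      have := hfF t (Finset.mem_Icc.mpr ht)
      nlinarith [norm_nonneg (f t)]
    by_cases hlt : t < T
    · -- projection step available
      have hpr := hproj t (Finset.mem_Icc.mpr ⟨ht.1, by omega⟩) z hzconv
      have hexp : ‖z - (ytil t - η • f t)‖ ^ 2 =
          ‖z - ytil t‖ ^ 2 + 2 * (η * ⟪z - ytil t, f t⟫) + η ^ 2 * ‖f t‖ ^ 2 := by
        have h1 : z - (ytil t - η • f t) = (z - ytil t) + η • f t := by abel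
        rw [h1, norm_add_sq_real, real_inner_smul_right, norm_smul]
        rw [Real.norm_eq_abs, abs_of_pos hη]
        ring
      have hEt : E t = ‖z - ytil t‖ ^ 2 := if_pos ht.2
      have hEt1 : E (t + 1) = ‖z - ytil (t + 1)‖ ^ 2 := if_pos (by omega)
      have hinner : ⟪ytil t - z, f t⟫ = -⟪z - ytil t, f t⟫ := by
        rw [← inner_neg_left, neg_sub]
      rw [hEt, hEt1, hinner]
      rw [hexp] at hpr
      rw [div_add' _ _ _ (by positivity), le_div_iff₀ (by positivity)]
      nlinarith [hpr, hη, hf2]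
    · -- last step: Cauchy-Schwarz + AM-GM
      have htT : t = T := by omega
      have hEt : E t = ‖z - ytil t‖ ^ 2 := if_pos ht.2
      have hEt1 : E (t + 1) = 0 := if_neg (by omega)
      have hcs : ⟪ytil t - z, f t⟫ ≤ ‖z - ytil t‖ * F := by
        calc ⟪ytil t - z, f t⟫ ≤ ‖ytil t - z‖ * ‖f t‖ := real_inner_le_norm _ _
          _ = ‖z - ytil t‖ * ‖f t‖ := by rw [norm_sub_rev]
          _ ≤ ‖z - ytil t‖ * F := by
              exact mul_le_mul_of_nonneg_left (hfF t (Finset.mem_Icc.mpr ht))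
                (norm_nonneg _)
      rw [hEt, hEt1, sub_zero]
      set a : ℝ := ‖z - ytil t‖ with ha
      set b : ℝ := ⟪ytil t - z, f t⟫ with hb
      have hann : 0 ≤ a := norm_nonneg _
      rw [div_add' _ _ _ (by positivity), le_div_iff₀ (by positivity)]
      nlinarith [sq_nonneg (a - η * F), hcs, hη, hFnn]
  -- per-step domination inequality
  have hdomstep : ∀ t ∈ Finset.Icc 1 T,
      ⟪sbar t, f t⟫ - ⟪z, f t⟫ ≤ ⟪ytil t - z, f t⟫ + 3 * F * ε := by
    intro t ht
    have hd := hdom t ht (f t) (hfpos t ht)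
    have hpt : ⟪p t, f t⟫ ≤ ⟪ytil t, f t⟫ + 3 * F * ε := by
      rw [Finset.mem_Icc] at ht
      by_cases h1 : t = 1
      · subst h1
        rw [hp1]
        nlinarith
      · have hc := hclose t (Finset.mem_Icc.mpr ⟨by omega, ht.2⟩)
        have : ⟪p t - ytil t, f t⟫ ≤ 3 * ε * F := by
          calc ⟪p t - ytil t, f t⟫ ≤ ‖p t - ytil t‖ * ‖f t‖ := real_inner_le_norm _ _
            _ ≤ (3 * ε) * F := by
                apply mul_le_mul hc (hfF t (Finset.mem_Icc.mpr ht)) (norm_nonneg _)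
                positivity
        rw [inner_sub_left] at this
        linarith
    rw [inner_sub_left]
    linarith
  -- telescoping sum
  have htel : ∑ t ∈ Finset.Icc 1 T, (E t - E (t + 1)) = E 1 - E (T + 1) := by
    rw [← Finset.Ico_add_one_right_eq_Icc, Finset.sum_Ico_eq_sum_range]
    have h := Finset.sum_range_sub' (fun i => E (1 + i)) T
    simp only [Nat.add_sub_cancel]
    simpa [Nat.add_comm] using h
  have hE1 : E 1 ≤ 2 * α ^ 2 * R ^ 2 := by
    have h1 : E 1 = ‖z - ytil 1‖ ^ 2 := if_pos hT
    have h2 : z - ytil 1 = α • (xs - s₁) := by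
      rw [hy1, hz, smul_sub]
    rw [h1, h2, norm_smul, Real.norm_eq_abs, abs_of_nonneg hα0, mul_pow]
    have hip : (0:ℝ) ≤ ⟪xs, s₁⟫ := by
      rw [PiLp.inner_apply]
      refine Finset.sum_nonneg fun i _ => ?_
      have := hKpos xs hxsK i
      have := hKpos s₁ hs₁ i
      simp only [RCLike.inner_apply, conj_trivial]
      exact mul_nonneg ‹0 ≤ s₁ i› ‹0 ≤ xs i›
    have hns : ‖xs - s₁‖ ^ 2 = ‖xs‖ ^ 2 - 2 * ⟪xs, s₁⟫ + ‖s₁‖ ^ 2 := by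
      rw [norm_sub_sq_real]
    have hxsR := hKR xs hxsK
    have hs1R := hKR s₁ hs₁
    have hxs2 : ‖xs‖ ^ 2 ≤ R ^ 2 := by nlinarith [norm_nonneg xs]
    have hs12 : ‖s₁‖ ^ 2 ≤ R ^ 2 := by nlinarith [norm_nonneg s₁]
    have hα1 : 1 ≤ α ^ 2 := by nlinarith
    nlinarith [sq_nonneg α]
  have hET1 : E (T + 1) = 0 := if_neg (by omega)
  -- total sum bound
  have hsum : ∑ t ∈ Finset.Icc 1 T, (⟪sbar t, f t⟫ - ⟪z, f t⟫) ≤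
      α ^ 2 * R ^ 2 / η + (T : ℝ) * (η * F ^ 2 / 2) + (T : ℝ) * (3 * F * ε) := by
    have h1 : ∑ t ∈ Finset.Icc 1 T, (⟪sbar t, f t⟫ - ⟪z, f t⟫) ≤
        ∑ t ∈ Finset.Icc 1 T,
          ((E t - E (t + 1)) / (2 * η) + η * F ^ 2 / 2 + 3 * F * ε) := by
      refine Finset.sum_le_sum fun t ht => ?_
      have := hdomstep t ht
      have := hstep t ht
      linarith
    have h2 : ∑ t ∈ Finset.Icc 1 T,
        ((E t - E (t + 1)) / (2 * η) + η * F ^ 2 / 2 + 3 * F * ε) =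
        (E 1 - E (T + 1)) / (2 * η) + (T : ℝ) * (η * F ^ 2 / 2) +
          (T : ℝ) * (3 * F * ε) := by
      rw [Finset.sum_add_distrib, Finset.sum_add_distrib, ← Finset.sum_div, htel,
        Finset.sum_const, Finset.sum_const, Nat.card_Icc, Nat.add_sub_cancel,
        nsmul_eq_mul, nsmul_eq_mul]
    rw [h2] at h1
    have h3 : (E 1 - E (T + 1)) / (2 * η) ≤ α ^ 2 * R ^ 2 / η := by
      rw [hET1, sub_zero, div_le_div_iff₀ (by positivity) hη]
      nlinarith
    linarith
  -- conclude
  calc (1 / (T : ℝ)) * ∑ t ∈ Finset.Icc 1 T, ⟪sbar t, f t⟫ -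
        α * ((1 / (T : ℝ)) * ∑ t ∈ Finset.Icc 1 T, ⟪xs, f t⟫)
      = (1 / (T : ℝ)) * ∑ t ∈ Finset.Icc 1 T, (⟪sbar t, f t⟫ - ⟪z, f t⟫) := by
        rw [Finset.sum_sub_distrib, mul_sub]
        congr 1
        simp only [hz, real_inner_smul_left]
        rw [← Finset.mul_sum]
        ring
    _ ≤ (1 / (T : ℝ)) * (α ^ 2 * R ^ 2 / η + (T : ℝ) * (η * F ^ 2 / 2) +
          (T : ℝ) * (3 * F * ε)) :=
        mul_le_mul_of_nonneg_left hsum (by positivity)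
    _ = α ^ 2 * R ^ 2 / ((T : ℝ) * η) + η * F ^ 2 / 2 + 3 * F * ε := by
        field_simp
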